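/- Let (E,F) be a triangulation datum. If the zero colouring is the only element of Adm(E,F,3), then the zero colouring is also the only element of Adm(E,F,4). -/

import Mathlib

/-- A colouring `θ : E → ℚ` is admissible for the triangulation datum `(E, F)`
and the integer `r` if every edge colour lies in `{0, 1/2, 1, …, (r-2)/2}` and
every triple of `F` satisfies the parity condition, the triangle inequalities,
and the upper bound constraint. -/
def IsAdmissible {E : Type*} (F : Multiset (E × E × E)) (r : ℕ) (θ : E → ℚ) : Prop :=
  (∀ e : E, ∃ k : ℕ, k ≤ r - 2 ∧ θ e = (k : ℚ) / 2) ∧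
  ∀ t ∈ F,
    (∃ z : ℤ, θ t.1 + θ t.2.1 + θ t.2.2 = (z : ℚ)) ∧
    θ t.1 ≤ θ t.2.1 + θ t.2.2 ∧
    θ t.2.1 ≤ θ t.1 + θ t.2.2 ∧
    θ t.2.2 ≤ θ t.1 + θ t.2.1 ∧
    θ t.1 + θ t.2.1 + θ t.2.2 ≤ (r : ℚ) - 2

/-- The set of admissible colourings of `(E, F)` for the integer `r`. -/
def Adm {E : Type*} (F : Multiset (E × E × E)) (r : ℕ) : Set (E → ℚ) :=
  {θ | IsAdmissible F r θ}


/-- If the zero colouring is the only element of `Adm(E,F,3)`, then it is also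
the only element of `Adm(E,F,4)`. -/
lemma two_mul_int_ne_odd (z n : ℤ) (hodd : ∃ m : ℤ, n = 2 * m + 1)
    (hcast : ((2 * z : ℤ) : ℚ) = ((n : ℤ) : ℚ)) : False := by
  have h1 : (2 * z : ℤ) = n := by exact_mod_cast hcast
  obtain ⟨m, hm⟩ := hodd
  omega

theorem adm_four_eq_singleton_zero {E : Type*} (F : Multiset (E × E × E))
    (h : Adm F 3 = {(0 : E → ℚ)}) :
    Adm F 4 = {(0 : E → ℚ)} := by
  classical
  ext θ
  simp only [Set.mem_singleton_iff]
  constructor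
  · rintro ⟨hv, ht⟩
    have hval : ∀ e, θ e = 0 ∨ θ e = 1/2 ∨ θ e = 1 := by
      intro e
      obtain ⟨k, hk, he⟩ := hv e
      have hk2 : k ≤ 2 := by omega
      interval_cases k <;> norm_num [he]
    set θ' : E → ℚ := fun e => if θ e = 1/2 then 1/2 else 0 with hθ'
    have h1 : θ' ∈ Adm F 3 := by
      refine ⟨fun e => ?_, fun t htF => ?_⟩
      · by_cases hc : θ e = 1/2
        · exact ⟨1, by norm_num, by simp only [hθ', if_pos hc]; norm_num⟩
        · exact ⟨0, by norm_num, by simp only [hθ', if_neg hc]; norm_num⟩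
      · obtain ⟨⟨z, hz⟩, h12, h21, h22, hub⟩ := ht t htF
        simp only [hθ']
        rcases hval t.1 with a|a|a <;> rcases hval t.2.1 with b|b|b <;>
          rcases hval t.2.2 with c|c|c <;> rw [a, b, c] at hz ⊢ <;>
          first
            | (refine ⟨⟨0, ?_⟩, ?_, ?_, ?_, ?_⟩ <;> norm_num
               done)
            | (refine ⟨⟨1, ?_⟩, ?_, ?_, ?_, ?_⟩ <;> norm_num
               done)
            | (exfalso
               have h2 : ((2 * z : ℤ) : ℚ) = ((1 : ℤ) : ℚ) := by
                 push_cast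
                 linarith
               exact two_mul_int_ne_odd z 1 ⟨0, rfl⟩ h2)
            | (exfalso
               have h2 : ((2 * z : ℤ) : ℚ) = ((3 : ℤ) : ℚ) := by
                 push_cast
                 linarith
               exact two_mul_int_ne_odd z 3 ⟨1, rfl⟩ h2)
            | (exfalso
               have h2 : ((2 * z : ℤ) : ℚ) = ((5 : ℤ) : ℚ) := by
                 push_cast
                 linarith
               exact two_mul_int_ne_odd z 5 ⟨2, rfl⟩ h2)
    rw [h, Set.mem_singleton_iff] at h1
    have hnohalf : ∀ e, θ e ≠ 1/2 := by
      intro e he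
      have h0 := congrFun h1 e
      simp [hθ', he] at h0
    have hval2 : ∀ e, θ e = 0 ∨ θ e = 1 := by
      intro e
      rcases hval e with a|a|a
      · exact Or.inl a
      · exact absurd a (hnohalf e)
      · exact Or.inr a
    set θ'' : E → ℚ := fun e => θ e / 2 with hθ''
    have h2 : θ'' ∈ Adm F 3 := by
      refine ⟨fun e => ?_, fun t htF => ?_⟩
      · rcases hval2 e with a|a
        · exact ⟨0, by norm_num, by simp [hθ'', a]⟩
        · exact ⟨1, by norm_num, by simp [hθ'', a]⟩
      · obtain ⟨⟨z, hz⟩, h12, h21, h22, hub⟩ := ht t htF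
        simp only [hθ'']
        rcases hval2 t.1 with a|a <;> rcases hval2 t.2.1 with b|b <;>
          rcases hval2 t.2.2 with c|c <;> rw [a, b, c] <;>
          first
            | (refine ⟨⟨0, ?_⟩, ?_, ?_, ?_, ?_⟩ <;> norm_num
               done)
            | (refine ⟨⟨1, ?_⟩, ?_, ?_, ?_, ?_⟩ <;> norm_num
               done)
            | (exfalso
               rw [a, b, c] at h12 h21 h22 hub
               all_goals (push_cast at hub; linarith))
    rw [h, Set.mem_singleton_iff] at h2
    funext e
    have h0 := congrFun h2 e
    simp only [hθ'', Pi.zero_apply] at h0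
    have : θ e / 2 = 0 := h0
    simpa using this
  · rintro rfl
    refine ⟨fun e => ⟨0, by norm_num, by norm_num⟩, fun t htF => ?_⟩
    exact ⟨⟨0, by norm_num⟩, by norm_num, by norm_num, by norm_num, by norm_num⟩
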